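/- Let P : ℝ² → B(H) be a C² family of orthogonal projectors, T_{k₂}(k₁, 0) the parallel transport in the k₁-direction at fixed k₂, and G(k₁,k₂) := [∂_{k₁}P(k₁,k₂), P(k₁,k₂)]. Then ∂_{k₂} T_{k₂}(k₁,0) = T_{k₂}(k₁,0) · ∫₀^{k₁} T_{k₂}(s,0)* · ∂_{k₂}G(s,k₂) · T_{k₂}(s,0) ds. -/

import Mathlib

open ContinuousLinearMap intervalIntegral


section helpers

private lemma exp_aux14 {x : ℝ} (hx : 0 ≤ x) : Real.exp x - 1 ≤ x * Real.exp x := by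
  have h1 : 1 - x ≤ Real.exp (-x) := by linarith [Real.add_one_le_exp (-x)]
  have h2 := Real.exp_pos x
  have h3 : Real.exp (-x) * Real.exp x = 1 := by
    rw [← Real.exp_add]; simp
  nlinarith [mul_le_mul_of_nonneg_right h1 h2.le]

private lemma gron_aux14 {E : Type*} [NormedAddCommGroup E] [NormedSpace ℝ E]
    {f f' : ℝ → E} {K ε a : ℝ} (hK : 0 ≤ K) (hε : 0 ≤ ε) (ha : 0 ≤ a)
    (hd : ∀ t, HasDerivAt f (f' t) t)
    (hb : ∀ t ∈ Set.Icc 0 a, ‖f' t‖ ≤ K * ‖f t‖ + ε)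
    (h0 : f 0 = 0) : ‖f a‖ ≤ ε * a * Real.exp (K * a) := by
  have hcont : ContinuousOn f (Set.Icc 0 a) :=
    fun t _ => ((hd t).continuousAt).continuousWithinAt
  have key := norm_le_gronwallBound_of_norm_deriv_right_le (δ := 0) (K := K) (ε := ε)
    hcont (fun x _ => (hd x).hasDerivWithinAt) (by simp [h0])
    (fun x hx => hb x ⟨hx.1, hx.2.le⟩) a ⟨ha, le_refl a⟩
  rw [sub_zero] at key
  refine key.trans ?_
  rcases eq_or_ne K 0 with hK0 | hK0
  · subst hK0; rw [gronwallBound_K0]; simp [Real.exp_nonneg]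
  · rw [gronwallBound_of_K_ne_0 hK0]
    have hKpos : 0 < K := lt_of_le_of_ne hK (Ne.symm hK0)
    have h1 : Real.exp (K * a) - 1 ≤ (K * a) * Real.exp (K * a) :=
      exp_aux14 (by positivity)
    simp only [zero_mul, zero_add, div_mul_eq_mul_div]
    rw [div_le_iff₀ hKpos]
    calc ε * (Real.exp (K * a) - 1) ≤ ε * ((K * a) * Real.exp (K * a)) :=
          mul_le_mul_of_nonneg_left h1 hε
      _ = ε * a * Real.exp (K * a) * K := by ring

private lemma gron14 {E : Type*} [NormedAddCommGroup E] [NormedSpace ℝ E]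
    {f f' : ℝ → E} {K ε a : ℝ} (hK : 0 ≤ K) (hε : 0 ≤ ε)
    (hd : ∀ t, HasDerivAt f (f' t) t)
    (hb : ∀ t ∈ Set.uIcc 0 a, ‖f' t‖ ≤ K * ‖f t‖ + ε)
    (h0 : f 0 = 0) : ‖f a‖ ≤ ε * |a| * Real.exp (K * |a|) := by
  rcases le_total 0 a with ha | ha
  · rw [abs_of_nonneg ha]
    exact gron_aux14 hK hε ha hd (fun t ht => hb t (by rwa [Set.uIcc_of_le ha])) h0
  · have hd' : ∀ t, HasDerivAt (fun u => f (-u)) ((-1 : ℝ) • f' (-t)) t := fun t =>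
      (hd (-t)).scomp t (hasDerivAt_neg t)
    rw [abs_of_nonpos ha]
    have : ‖f (-(-a))‖ ≤ ε * (-a) * Real.exp (K * (-a)) := by
      apply gron_aux14 (f := fun u => f (-u)) (f' := fun t => (-1 : ℝ) • f' (-t))
        hK hε (by linarith) hd' ?_ (by simpa using h0)
      intro t ht
      have : -t ∈ Set.uIcc 0 a := by
        rw [Set.uIcc_of_ge ha]
        constructor <;> [linarith [ht.2]; linarith [ht.1]]
      simpa using hb (-t) this
    simpa using this

private lemma abs_le_of_mem_uIcc14 {a s : ℝ} (hs : s ∈ Set.uIcc 0 a) : |s| ≤ |a| := by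
  rcases le_total 0 a with h | h
  · rw [Set.uIcc_of_le h] at hs
    rw [abs_of_nonneg hs.1, abs_of_nonneg h]; exact hs.2
  · rw [Set.uIcc_of_ge h] at hs
    rw [abs_of_nonpos hs.2, abs_of_nonpos h]; linarith [hs.1]

end helpers

set_option maxHeartbeats 4000000 in
set_option synthInstance.maxHeartbeats 400000 in
theorem statement14 {H : Type*} [NormedAddCommGroup H] [InnerProductSpace ℂ H]
    [CompleteSpace H]
    (P D1 D2 D12 : ℝ → ℝ → H →L[ℂ] H)
    (hproj : ∀ k₁ k₂, (P k₁ k₂).comp (P k₁ k₂) = P k₁ k₂)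
    (hsa : ∀ k₁ k₂, ContinuousLinearMap.adjoint (P k₁ k₂) = P k₁ k₂)
    (hD1 : ∀ k₁ k₂, HasDerivAt (fun t => P t k₂) (D1 k₁ k₂) k₁)
    (hD2 : ∀ k₁ k₂, HasDerivAt (fun t => P k₁ t) (D2 k₁ k₂) k₂)
    (hD12 : ∀ k₁ k₂, HasDerivAt (fun t => D1 k₁ t) (D12 k₁ k₂) k₂)
    (hc1 : Continuous (fun p : ℝ × ℝ => D1 p.1 p.2))
    (hc2 : Continuous (fun p : ℝ × ℝ => D2 p.1 p.2))
    (hc12 : Continuous (fun p : ℝ × ℝ => D12 p.1 p.2))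
    (G : ℝ → ℝ → H →L[ℂ] H)
    (hG : ∀ k₁ k₂, G k₁ k₂ =
      (D1 k₁ k₂).comp (P k₁ k₂) - (P k₁ k₂).comp (D1 k₁ k₂))
    (T : ℝ → ℝ → H →L[ℂ] H)  -- `T k₂ k₁` is `T_{k₂}(k₁, 0)`
    (hT : ∀ k₂ k₁, HasDerivAt (fun s => T k₂ s) ((G k₁ k₂).comp (T k₂ k₁)) k₁)
    (hT0 : ∀ k₂, T k₂ 0 = 1) :
    ∀ k₂ k₁, HasDerivAt (fun t => T t k₁)
      ((T k₂ k₁).comp (∫ s in (0:ℝ)..k₁,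
        (ContinuousLinearMap.adjoint (T k₂ s)).comp
          ((((D12 s k₂).comp (P s k₂) - (P s k₂).comp (D12 s k₂)) +
            ((D1 s k₂).comp (D2 s k₂) - (D2 s k₂).comp (D1 s k₂))).comp
            (T k₂ s)))) k₂ := by
  intro b a
  -- restate with ring multiplication
  have hT' : ∀ k₂ k₁, HasDerivAt (T k₂) (G k₁ k₂ * T k₂ k₁) k₁ := hT
  have hG' : ∀ x y, G x y = D1 x y * P x y - P x y * D1 x y := hG
  have hproj' : ∀ x y, P x y * P x y = P x y := hproj
  -- star facts
  have hstarP : ∀ x y, star (P x y) = P x y := fun x y => by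
    rw [star_eq_adjoint, hsa]
  have hstarD1 : ∀ x y, star (D1 x y) = D1 x y := by
    intro x y
    have h := (hD1 x y).star
    simp only [hstarP] at h
    exact h.unique (hD1 x y)
  have hstarG : ∀ x y, star (G x y) = -G x y := by
    intro x y
    rw [hG', star_sub, star_mul, star_mul, hstarP, hstarD1, neg_sub]
  -- derivative of star T
  have hTs : ∀ s : ℝ, HasDerivAt (fun u => star (T b u)) (-(star (T b s) * G s b)) s := by
    intro s
    have h := (hT' b s).star
    rw [star_mul, hstarG, mul_neg] at h
    exact h
  -- continuity of s ↦ G s b, s ↦ T b s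
  have contPb : Continuous fun u : ℝ => P u b :=
    continuous_iff_continuousAt.2 fun u => (hD1 u b).continuousAt
  have contD1b : Continuous fun u : ℝ => D1 u b :=
    hc1.comp (continuous_id.prodMk continuous_const)
  have contGb : Continuous fun u : ℝ => G u b := by
    have : (fun u : ℝ => G u b) = fun u => D1 u b * P u b - P u b * D1 u b := by
      funext u; rw [hG']
    rw [this]
    exact (contD1b.mul contPb).sub (contPb.mul contD1b)
  have contTb : Continuous (T b) :=
    continuous_iff_continuousAt.2 fun s => (hT' b s).continuousAt
  -- unitarity : T b s * (T b s)^* = 1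
  have hUnit : ∀ s : ℝ, T b s * star (T b s) = 1 := by
    intro s₀
    obtain ⟨K, hK⟩ :=
      isCompact_uIcc.exists_bound_of_continuousOn (contGb.continuousOn (s := Set.uIcc 0 s₀))
    have hK0 : 0 ≤ K := (norm_nonneg _).trans (hK 0 Set.left_mem_uIcc)
    set f : ℝ → H →L[ℂ] H := fun s => T b s * star (T b s) - 1 with hfdef
    have hd : ∀ s, HasDerivAt f (G s b * f s - f s * G s b) s := by
      intro s
      have h := ((hT' b s).mul (hTs s)).sub_const 1
      refine h.congr_deriv ?_
      simp only [hfdef]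
      noncomm_ring
    have hbound : ∀ s ∈ Set.uIcc 0 s₀,
        ‖G s b * f s - f s * G s b‖ ≤ (2 * K) * ‖f s‖ + 0 := by
      intro s hs
      rw [add_zero]
      calc ‖G s b * f s - f s * G s b‖ ≤ ‖G s b * f s‖ + ‖f s * G s b‖ := norm_sub_le _ _
        _ ≤ ‖G s b‖ * ‖f s‖ + ‖f s‖ * ‖G s b‖ := add_le_add (norm_mul_le _ _) (norm_mul_le _ _)
        _ ≤ 2 * K * ‖f s‖ := by nlinarith [hK s hs, norm_nonneg (f s), norm_nonneg (G s b)]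
    have h0 : f 0 = 0 := by simp [hfdef, hT0]
    have := gron14 (by linarith) (le_refl (0:ℝ)) hd hbound h0
    simp only [zero_mul] at this
    have hf0 : f s₀ = 0 := norm_le_zero_iff.1 this
    have := sub_eq_zero.1 hf0
    exact this
  -- second derivative of G in the second variable
  set G2 : ℝ → ℝ → H →L[ℂ] H := fun x y =>
    (D12 x y * P x y - P x y * D12 x y) + (D1 x y * D2 x y - D2 x y * D1 x y) with hG2def
  have hG2d : ∀ x y, HasDerivAt (fun t => G x t) (G2 x y) y := by
    intro x y
    have h := ((hD12 x y).mul (hD2 x y)).sub ((hD2 x y).mul (hD12 x y))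
    have hfun : (fun t => D1 x t * P x t - P x t * D1 x t) = fun t => G x t := by
      funext t; rw [hG']
    rw [show (((fun t => D1 x t) * fun t => P x t) - (fun t => P x t) * fun t => D1 x t) =
      fun t => G x t from hfun] at h
    refine h.congr_deriv ?_
    simp only [hG2def]
    abel
  -- joint continuity of P
  have contP : Continuous fun p : ℝ × ℝ => P p.1 p.2 := by
    rw [continuous_iff_continuousAt]
    rintro ⟨x₀, y₀⟩
    have hbox : IsCompact ((Set.Icc (x₀-1) (x₀+1)) ×ˢ (Set.Icc (y₀-1) (y₀+1))) :=
      isCompact_Icc.prod isCompact_Icc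
    obtain ⟨C1, hC1⟩ := hbox.exists_bound_of_continuousOn hc1.continuousOn
    obtain ⟨C2, hC2⟩ := hbox.exists_bound_of_continuousOn hc2.continuousOn
    have key : ∀ p : ℝ × ℝ, p ∈ (Set.Icc (x₀-1) (x₀+1)) ×ˢ (Set.Icc (y₀-1) (y₀+1)) →
        ‖P p.1 p.2 - P x₀ y₀‖ ≤ C1 * |p.1 - x₀| + C2 * |p.2 - y₀| := by
      rintro ⟨x, y⟩ ⟨hx, hy⟩
      have e1 : ‖P x y - P x₀ y‖ ≤ C1 * |x - x₀| := by
        have := (convex_Icc (x₀-1) (x₀+1)).norm_image_sub_le_of_norm_hasDerivWithin_le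
          (f := fun t => P t y) (f' := fun t => D1 t y)
          (fun t ht => (hD1 t y).hasDerivWithinAt)
          (fun t ht => hC1 (t, y) ⟨ht, hy⟩)
          (x := x₀) (y := x)
          ⟨by linarith, by linarith⟩ hx
        simpa [Real.norm_eq_abs] using this
      have e2 : ‖P x₀ y - P x₀ y₀‖ ≤ C2 * |y - y₀| := by
        have := (convex_Icc (y₀-1) (y₀+1)).norm_image_sub_le_of_norm_hasDerivWithin_le
          (f := fun t => P x₀ t) (f' := fun t => D2 x₀ t)
          (fun t ht => (hD2 x₀ t).hasDerivWithinAt)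
          (fun t ht => hC2 (x₀, t) ⟨⟨by linarith, by linarith⟩, ht⟩)
          (x := y₀) (y := y)
          ⟨by linarith, by linarith⟩ hy
        simpa [Real.norm_eq_abs] using this
      calc ‖P x y - P x₀ y₀‖ ≤ ‖P x y - P x₀ y‖ + ‖P x₀ y - P x₀ y₀‖ := by
            simpa using norm_add_le (P x y - P x₀ y) (P x₀ y - P x₀ y₀)
        _ ≤ C1 * |x - x₀| + C2 * |y - y₀| := add_le_add e1 e2
    have hev : ∀ᶠ p : ℝ × ℝ in nhds (x₀, y₀),
        ‖P p.1 p.2 - P x₀ y₀‖ ≤ C1 * |p.1 - x₀| + C2 * |p.2 - y₀| := by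
      have hmem : (Set.Icc (x₀-1) (x₀+1)) ×ˢ (Set.Icc (y₀-1) (y₀+1)) ∈ nhds ((x₀, y₀) : ℝ × ℝ) :=
        prod_mem_nhds (Icc_mem_nhds (by linarith) (by linarith))
          (Icc_mem_nhds (by linarith) (by linarith))
      filter_upwards [hmem] with p hp using key p hp
    have hlim : Filter.Tendsto (fun p : ℝ × ℝ => C1 * |p.1 - x₀| + C2 * |p.2 - y₀|)
        (nhds (x₀, y₀)) (nhds 0) := by
      have hcont : Continuous fun p : ℝ × ℝ => C1 * |p.1 - x₀| + C2 * |p.2 - y₀| :=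
        (continuous_const.mul ((continuous_fst.sub continuous_const).abs)).add
          (continuous_const.mul ((continuous_snd.sub continuous_const).abs))
      have := hcont.tendsto (x₀, y₀)
      simpa using this
    have htend := squeeze_zero_norm' hev hlim
    have : Filter.Tendsto (fun p : ℝ × ℝ => P p.1 p.2) (nhds (x₀, y₀)) (nhds (P x₀ y₀)) := by
      have h2 := htend.add_const (P x₀ y₀)
      simpa using h2
    exact this
  -- joint continuity of G and G2
  have contG : Continuous fun p : ℝ × ℝ => G p.1 p.2 := by
    have : (fun p : ℝ × ℝ => G p.1 p.2) =
        fun p : ℝ × ℝ => D1 p.1 p.2 * P p.1 p.2 - P p.1 p.2 * D1 p.1 p.2 := by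
      funext p; rw [hG']
    rw [this]
    exact (hc1.mul contP).sub (contP.mul hc1)
  have contG2 : Continuous fun p : ℝ × ℝ => G2 p.1 p.2 :=
    ((hc12.mul contP).sub (contP.mul hc12)).add ((hc1.mul hc2).sub (hc2.mul hc1))
  have contTbs : Continuous fun s => star (T b s) := contTb.star
  -- the integrand, integral, and candidate derivative
  set φ : ℝ → H →L[ℂ] H := fun u =>
    (ContinuousLinearMap.adjoint (T b u)).comp
      ((((D12 u b).comp (P u b) - (P u b).comp (D12 u b)) +
        ((D1 u b).comp (D2 u b) - (D2 u b).comp (D1 u b))).comp (T b u)) with hφdef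
  have hφeq : φ = fun u => star (T b u) * (G2 u b * T b u) := by
    funext u
    simp only [hφdef]
    rw [← star_eq_adjoint]
    rfl
  have contφ : Continuous φ := by
    rw [hφeq]
    exact contTbs.mul (((contG2.comp (continuous_id.prodMk continuous_const))).mul contTb)
  set Q : ℝ → H →L[ℂ] H := fun s => ∫ u in (0:ℝ)..s, φ u with hQdef
  set Z : ℝ → H →L[ℂ] H := fun s => T b s * Q s with hZdef
  have hQd : ∀ s, HasDerivAt Q (φ s) s := by
    intro s
    exact intervalIntegral.integral_hasDerivAt_right
      (contφ.intervalIntegrable _ _)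
      (contφ.aestronglyMeasurable.stronglyMeasurableAtFilter)
      contφ.continuousAt
  have contQ : Continuous Q := continuous_iff_continuousAt.2 fun s => (hQd s).continuousAt
  have contZ : Continuous Z := contTb.mul contQ
  have hZd : ∀ s, HasDerivAt Z (G s b * Z s + G2 s b * T b s) s := by
    intro s
    have h := (hT' b s).mul (hQd s)
    refine h.congr_deriv ?_
    have hφs : T b s * φ s = G2 s b * T b s := by
      rw [hφeq]
      calc T b s * (star (T b s) * (G2 s b * T b s))
          = (T b s * star (T b s)) * (G2 s b * T b s) := (mul_assoc _ _ _).symm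
        _ = G2 s b * T b s := by rw [hUnit s, one_mul]
    simp only [hZdef]
    rw [← hφs, mul_assoc]
  -- constants
  have hJcpt : IsCompact (Set.uIcc (0:ℝ) a) := isCompact_uIcc
  obtain ⟨CT₀, hCT₀⟩ := hJcpt.exists_bound_of_continuousOn contTb.continuousOn
  set CT := max CT₀ 0 with hCTdef
  have hCT : ∀ s ∈ Set.uIcc (0:ℝ) a, ‖T b s‖ ≤ CT := fun s hs =>
    (hCT₀ s hs).trans (le_max_left _ _)
  have hCT0 : 0 ≤ CT := le_max_right _ _
  obtain ⟨CZ₀, hCZ₀⟩ := hJcpt.exists_bound_of_continuousOn contZ.continuousOn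
  set CZ := max CZ₀ 0 with hCZdef
  have hCZ : ∀ s ∈ Set.uIcc (0:ℝ) a, ‖Z s‖ ≤ CZ := fun s hs =>
    (hCZ₀ s hs).trans (le_max_left _ _)
  have hCZ0 : 0 ≤ CZ := le_max_right _ _
  have hboxcpt : IsCompact ((Set.uIcc (0:ℝ) a) ×ˢ (Set.Icc (b-1) (b+1))) :=
    hJcpt.prod isCompact_Icc
  obtain ⟨M₀, hM₀⟩ := hboxcpt.exists_bound_of_continuousOn contG.continuousOn
  set M := max M₀ 0 with hMdef
  have hM : ∀ p ∈ (Set.uIcc (0:ℝ) a) ×ˢ (Set.Icc (b-1) (b+1)), ‖G p.1 p.2‖ ≤ M := fun p hp =>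
    (hM₀ p hp).trans (le_max_left _ _)
  have hM0 : 0 ≤ M := le_max_right _ _
  obtain ⟨L₀, hL₀⟩ := hboxcpt.exists_bound_of_continuousOn contG2.continuousOn
  set L := max L₀ 0 with hLdef
  have hL : ∀ p ∈ (Set.uIcc (0:ℝ) a) ×ˢ (Set.Icc (b-1) (b+1)), ‖G2 p.1 p.2‖ ≤ L := fun p hp =>
    (hL₀ p hp).trans (le_max_left _ _)
  have hL0 : 0 ≤ L := le_max_right _ _
  -- Lipschitz bound for G in the second variable
  have hGdiff : ∀ s ∈ Set.uIcc (0:ℝ) a, ∀ h : ℝ, |h| ≤ 1 →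
      ‖G s (b+h) - G s b‖ ≤ L * |h| := by
    intro s hs h hh
    have habs := abs_le.1 hh
    have := (convex_Icc (b-1) (b+1)).norm_image_sub_le_of_norm_hasDerivWithin_le
      (f := fun t => G s t) (f' := fun t => G2 s t)
      (fun t ht => (hG2d s t).hasDerivWithinAt)
      (fun t ht => hL (s, t) ⟨hs, ht⟩)
      (x := b) (y := b + h)
      ⟨by linarith, by linarith⟩ ⟨by linarith, by linarith⟩
    simpa [Real.norm_eq_abs] using this
  -- first-order Taylor bound for G in the second variable, uniform in s
  have hTaylor : ∀ ε : ℝ, 0 < ε → ∃ δ : ℝ, 0 < δ ∧ δ ≤ 1 ∧ ∀ s ∈ Set.uIcc (0:ℝ) a, ∀ h : ℝ,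
      |h| ≤ δ → ‖G s (b+h) - G s b - h • G2 s b‖ ≤ ε * |h| := by
    intro ε hε
    have huc := hboxcpt.uniformContinuousOn_of_continuous contG2.continuousOn
    rw [Metric.uniformContinuousOn_iff] at huc
    obtain ⟨δ₁, hδ₁0, hδ₁⟩ := huc ε hε
    refine ⟨min (δ₁/2) 1, by positivity, min_le_right _ _, ?_⟩
    intro s hs h hh
    have hδ'le : min (δ₁/2) 1 ≤ 1 := min_le_right _ _
    have hh1 : |h| ≤ 1 := hh.trans hδ'le
    have habs := abs_le.1 hh
    have habs1 := abs_le.1 hh1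
    set δ' := min (δ₁/2) 1 with hδ'def
    have hδ'0 : 0 < δ' := by positivity
    have key := (convex_Icc (b-δ') (b+δ')).norm_image_sub_le_of_norm_hasDerivWithin_le
      (f := fun t => G s t - (t - b) • G2 s b) (f' := fun t => G2 s t - G2 s b)
      (fun t ht => ((hG2d s t).sub (by
        have : HasDerivAt (fun t : ℝ => (t - b) • G2 s b) ((1:ℝ) • G2 s b) t :=
          (((hasDerivAt_id t).sub_const b)).smul_const (G2 s b)
        simpa using this)).hasDerivWithinAt)
      (fun t ht => by
        have ht1 : t ∈ Set.Icc (b-1) (b+1) := by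
          rcases ht with ⟨h1, h2⟩
          constructor <;> [linarith [hδ'le]; linarith [hδ'le]]
        have hdist : dist ((s, t) : ℝ × ℝ) ((s, b) : ℝ × ℝ) < δ₁ := by
          have h1 : |t - b| ≤ δ' := abs_le.2 ⟨by linarith [ht.1], by linarith [ht.2]⟩
          have h2 : |t - b| < δ₁ :=
            lt_of_le_of_lt (h1.trans (min_le_left _ _)) (by linarith)
          rw [Prod.dist_eq]
          exact max_lt (by simpa using hδ₁0) (by rw [Real.dist_eq]; exact h2)
        have := hδ₁ (s, t) ⟨hs, ht1⟩ (s, b) ⟨hs, ⟨by linarith, by linarith⟩⟩ hdist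
        rw [dist_eq_norm] at this
        exact this.le)
      (x := b) (y := b + h)
      ⟨by linarith, by linarith⟩
      ⟨by linarith [hh, abs_le.1 hh], by linarith [abs_le.1 hh]⟩
    simp only [sub_self, zero_smul, sub_zero, add_sub_cancel_left] at key
    calc ‖G s (b+h) - G s b - h • G2 s b‖
        = ‖G s (b+h) - h • G2 s b - G s b‖ := by abel_nf
      _ ≤ ε * ‖h‖ := key
      _ = ε * |h| := by rw [Real.norm_eq_abs]
  -- main estimate: little-o characterisation of the derivative in the second variable
  show HasDerivAt (fun t => T t a) (Z a) b
  rw [hasDerivAt_iff_isLittleO_nhds_zero, Asymptotics.isLittleO_iff]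
  intro c hc
  set Kc := |a| * Real.exp (M * |a|) with hKcdef
  have hKc0 : 0 ≤ Kc := by rw [hKcdef]; positivity
  have hKc1 : (0:ℝ) < Kc + 1 := by linarith
  have hCT1 : (0:ℝ) < CT + 1 := by linarith
  have hLCZ0 : (0:ℝ) ≤ L * CZ := mul_nonneg hL0 hCZ0
  have hLCZ1 : (0:ℝ) < L * CZ + 1 := by linarith
  set ε := c / (2 * (CT + 1) * (Kc + 1)) with hεdef
  have hε0 : 0 < ε := by
    rw [hεdef]; apply div_pos hc; nlinarith [hCT1, hKc1]
  obtain ⟨δ, hδ0, hδ1, hδ⟩ := hTaylor ε hε0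
  set r := c / (2 * (L * CZ + 1) * (Kc + 1)) with hrdef
  have hr0 : 0 < r := by
    rw [hrdef]; apply div_pos hc; nlinarith [hLCZ1, hKc1]
  have hδ'0 : 0 < min δ r := lt_min hδ0 hr0
  filter_upwards [eventually_abs_sub_lt 0 hδ'0] with h hh
  rw [sub_zero] at hh
  have hhδ : |h| ≤ δ := (le_of_lt hh).trans (min_le_left _ _)
  have hhr : |h| ≤ r := (le_of_lt hh).trans (min_le_right _ _)
  have hh1 : |h| ≤ 1 := hhδ.trans hδ1
  have hbh : b + h ∈ Set.Icc (b-1) (b+1) := by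
    have := abs_le.1 hh1
    exact ⟨by linarith [this.1], by linarith [this.2]⟩
  set Δ : ℝ → H →L[ℂ] H := fun s => T (b+h) s - T b s with hΔdef
  have hΔd : ∀ s, HasDerivAt Δ (G s (b+h) * Δ s + (G s (b+h) - G s b) * T b s) s := by
    intro s
    have hder := (hT' (b+h) s).sub (hT' b s)
    refine hder.congr_deriv ?_
    simp only [hΔdef]
    noncomm_ring
  set E : ℝ → H →L[ℂ] H := fun s => Δ s - h • Z s with hEdef
  have hEd : ∀ s, HasDerivAt E
      (G s (b+h) * E s + (h • ((G s (b+h) - G s b) * Z s)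
        + (G s (b+h) - G s b - h • G2 s b) * T b s)) s := by
    intro s
    have hder := (hΔd s).sub ((hZd s).const_smul h)
    refine hder.congr_deriv ?_
    simp only [hEdef]
    simp only [mul_sub, sub_mul, smul_sub, smul_add, mul_smul_comm, smul_mul_assoc]
    abel
  have hE0 : E 0 = 0 := by
    simp [hEdef, hΔdef, hZdef, hQdef, hT0, intervalIntegral.integral_same]
  have hεE0 : 0 ≤ (L * CZ * |h| + ε * CT) * |h| :=
    mul_nonneg (add_nonneg (by positivity) (mul_nonneg hε0.le hCT0)) (abs_nonneg h)
  have hEbound : ∀ s ∈ Set.uIcc (0:ℝ) a,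
      ‖G s (b+h) * E s + (h • ((G s (b+h) - G s b) * Z s)
        + (G s (b+h) - G s b - h • G2 s b) * T b s)‖
      ≤ M * ‖E s‖ + (L * CZ * |h| + ε * CT) * |h| := by
    intro s hs
    have t1 : ‖G s (b+h) * E s‖ ≤ M * ‖E s‖ :=
      (norm_mul_le _ _).trans
        (mul_le_mul_of_nonneg_right (hM (s, b+h) ⟨hs, hbh⟩) (norm_nonneg _))
    have t2 : ‖(G s (b+h) - G s b) * Z s‖ ≤ (L * |h|) * CZ := by
      refine (norm_mul_le _ _).trans ?_
      exact mul_le_mul (hGdiff s hs h hh1) (hCZ s hs) (norm_nonneg _) (by positivity)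
    have t3 : ‖(G s (b+h) - G s b - h • G2 s b) * T b s‖ ≤ (ε * |h|) * CT := by
      refine (norm_mul_le _ _).trans ?_
      exact mul_le_mul (hδ s hs h hhδ) (hCT s hs) (norm_nonneg _) (mul_nonneg hε0.le (abs_nonneg h))
    calc ‖G s (b+h) * E s + (h • ((G s (b+h) - G s b) * Z s)
            + (G s (b+h) - G s b - h • G2 s b) * T b s)‖
        ≤ ‖G s (b+h) * E s‖ + (‖h • ((G s (b+h) - G s b) * Z s)‖
            + ‖(G s (b+h) - G s b - h • G2 s b) * T b s‖) :=
          (norm_add_le _ _).trans (add_le_add le_rfl (norm_add_le _ _))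
      _ = ‖G s (b+h) * E s‖ + (|h| * ‖(G s (b+h) - G s b) * Z s‖
            + ‖(G s (b+h) - G s b - h • G2 s b) * T b s‖) := by
          rw [norm_smul, Real.norm_eq_abs]
      _ ≤ M * ‖E s‖ + (|h| * ((L * |h|) * CZ) + (ε * |h|) * CT) := by
          refine add_le_add t1 (add_le_add ?_ t3)
          exact mul_le_mul_of_nonneg_left t2 (abs_nonneg h)
      _ = M * ‖E s‖ + (L * CZ * |h| + ε * CT) * |h| := by ring
  have hEa := gron14 hM0 hεE0 hEd hEbound hE0
  have harith : (L * CZ * |h| + ε * CT) * |h| * |a| * Real.exp (M * |a|) ≤ c * |h| := by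
    have hX : (0:ℝ) < (L * CZ + 1) * (Kc + 1) := mul_pos hLCZ1 hKc1
    have e1 : L * CZ * |h| * Kc ≤ c / 2 := by
      have hcmp : L * CZ * Kc ≤ (L * CZ + 1) * (Kc + 1) := by
        nlinarith [hLCZ0, hKc0]
      have hne1 : (L * CZ + 1) ≠ 0 := hLCZ1.ne'
      have hne2 : (Kc + 1) ≠ 0 := hKc1.ne'
      calc L * CZ * |h| * Kc = (L * CZ * Kc) * |h| := by ring
        _ ≤ ((L * CZ + 1) * (Kc + 1)) * |h| :=
            mul_le_mul_of_nonneg_right hcmp (abs_nonneg h)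
        _ ≤ ((L * CZ + 1) * (Kc + 1)) * r := mul_le_mul_of_nonneg_left hhr hX.le
        _ = c / 2 := by rw [hrdef]; field_simp
    have e2 : ε * CT * Kc ≤ c / 2 := by
      have hcmp : CT * Kc ≤ (CT + 1) * (Kc + 1) := by nlinarith [hCT0, hKc0]
      have hne1 : (CT + 1) ≠ 0 := hCT1.ne'
      have hne2 : (Kc + 1) ≠ 0 := hKc1.ne'
      calc ε * CT * Kc = ε * (CT * Kc) := by ring
        _ ≤ ε * ((CT + 1) * (Kc + 1)) := mul_le_mul_of_nonneg_left hcmp hε0.le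
        _ = c / 2 := by rw [hεdef]; field_simp
    calc (L * CZ * |h| + ε * CT) * |h| * |a| * Real.exp (M * |a|)
        = (L * CZ * |h| * Kc + ε * CT * Kc) * |h| := by rw [hKcdef]; ring
      _ ≤ (c / 2 + c / 2) * |h| :=
          mul_le_mul_of_nonneg_right (add_le_add e1 e2) (abs_nonneg h)
      _ = c * |h| := by ring
  have hEaeq : E a = T (b+h) a - T b a - h • Z a := by
    simp only [hEdef, hΔdef]
  rw [Real.norm_eq_abs, ← hEaeq]
  exact hEa.trans harith
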